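/- arXiv:2508.16426 — 2 statements merged into one kernel-verified Lean document; each statement's English description precedes it below -/
import Mathlib

section
/- As z → 1⁺, sqrt(z^2 - 1) - arccos(1/z) = (2√2/3)(z-1)^{3/2} + O((z-1)^{5/2}). -/
open Real

lemma hasDerivAt_H {t : ℝ} (ht : 1 < t) :
    HasDerivAt (fun t : ℝ => Real.sqrt (t^2 - 1) - Real.arccos (1/t)
        - (2 * Real.sqrt 2 / 3) * (t - 1) ^ ((3:ℝ)/2))
      (Real.sqrt (t - 1) * (Real.sqrt (t + 1) / t - Real.sqrt 2)) t := by
  have ht0 : (0:ℝ) < t := by linarith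
  have hs0 : (0:ℝ) < t^2 - 1 := by nlinarith
  have hsq : Real.sqrt (t^2 - 1) > 0 := Real.sqrt_pos.mpr hs0
  -- piece A : sqrt (t^2 - 1)
  have hA0 : HasDerivAt (fun t : ℝ => t^2 - 1) (2*t) t := by
    simpa using (hasDerivAt_pow 2 t).sub_const 1
  have hA : HasDerivAt (fun t : ℝ => Real.sqrt (t^2 - 1))
      (t / Real.sqrt (t^2 - 1)) t := by
    have := (Real.hasDerivAt_sqrt (ne_of_gt hs0)).comp t hA0
    refine this.congr_deriv ?_
    field_simp
  -- piece B : arccos (1/t)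
  have hinv : HasDerivAt (fun t : ℝ => 1/t) (-(t^2)⁻¹) t := by
    simpa [one_div] using hasDerivAt_inv (ne_of_gt ht0)
  have h1t : (0:ℝ) < 1/t := by positivity
  have h1t1 : 1/t < 1 := by rw [div_lt_one ht0]; linarith
  have hB : HasDerivAt (fun t : ℝ => Real.arccos (1/t))
      (1 / (t * Real.sqrt (t^2 - 1))) t := by
    have := (Real.hasDerivAt_arccos (by linarith : (1:ℝ)/t ≠ -1)
      (ne_of_lt h1t1)).comp t hinv
    refine this.congr_deriv ?_
    have h1 : 1 - (1/t)^2 = (t^2 - 1)/t^2 := by field_simp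
    have h2 : Real.sqrt ((t^2-1)/t^2) = Real.sqrt (t^2-1) / t := by
      rw [Real.sqrt_div hs0.le, Real.sqrt_sq ht0.le]
    rw [h1, h2]
    field_simp
  -- piece C : (2√2/3)(t-1)^{3/2}
  have hC0 : HasDerivAt (fun t : ℝ => t - 1) 1 t := (hasDerivAt_id t).sub_const 1
  have hC1 : HasDerivAt (fun x : ℝ => x ^ ((3:ℝ)/2))
      ((3/2) * (t-1) ^ ((3:ℝ)/2 - 1)) (t - 1) :=
    Real.hasDerivAt_rpow_const (Or.inl (by linarith))
  have hC : HasDerivAt (fun t : ℝ => (2 * Real.sqrt 2 / 3) * (t - 1) ^ ((3:ℝ)/2))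
      (Real.sqrt 2 * Real.sqrt (t - 1)) t := by
    have := ((hC1.comp t hC0).const_mul (2 * Real.sqrt 2 / 3))
    refine this.congr_deriv ?_
    have : (3:ℝ)/2 - 1 = 1/2 := by norm_num
    rw [this, ← Real.sqrt_eq_rpow]
    ring
  have := (hA.sub hB).sub hC
  refine this.congr_deriv ?_
  -- simplify the derivative
  have hfac : Real.sqrt (t^2 - 1) = Real.sqrt (t-1) * Real.sqrt (t+1) := by
    rw [← Real.sqrt_mul (by linarith : (0:ℝ) ≤ t - 1)]
    ring_nf
  have ha : (0:ℝ) < Real.sqrt (t-1) := Real.sqrt_pos.mpr (by linarith)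
  have hb : (0:ℝ) < Real.sqrt (t+1) := Real.sqrt_pos.mpr (by linarith)
  have ha2 : Real.sqrt (t-1) ^ 2 = t - 1 := Real.sq_sqrt (by linarith)
  have hb2 : Real.sqrt (t+1) ^ 2 = t + 1 := Real.sq_sqrt (by linarith)
  have hab : Real.sqrt (t-1) * Real.sqrt (t+1) ≠ 0 := by positivity
  have hab2 : (Real.sqrt (t-1) * Real.sqrt (t+1))^2 = t^2 - 1 := by
    rw [mul_pow, ha2, hb2]; ring
  have key1 : t / (Real.sqrt (t-1) * Real.sqrt (t+1))
      - 1 / (t * (Real.sqrt (t-1) * Real.sqrt (t+1)))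
      = Real.sqrt (t-1) * Real.sqrt (t+1) / t := by
    have e1 : t / (Real.sqrt (t-1) * Real.sqrt (t+1))
        - 1 / (t * (Real.sqrt (t-1) * Real.sqrt (t+1)))
        = (t^2 - 1) / (t * (Real.sqrt (t-1) * Real.sqrt (t+1))) := by
      field_simp
    rw [e1, ← hab2, sq, mul_comm t (Real.sqrt (t-1) * Real.sqrt (t+1)),
      ← div_div, mul_div_assoc, div_self hab, mul_one]
  rw [hfac, key1]
  ring

lemma deriv_bound {t : ℝ} (ht : 1 < t) (ht2 : t < 2) :
    |Real.sqrt (t - 1) * (Real.sqrt (t + 1) / t - Real.sqrt 2)|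
      ≤ (5/2) * (t - 1) * Real.sqrt (t - 1) := by
  have ht0 : (0:ℝ) < t := by linarith
  have ha : (0:ℝ) < Real.sqrt (t-1) := Real.sqrt_pos.mpr (by linarith)
  have hb : (0:ℝ) < Real.sqrt (t+1) := Real.sqrt_pos.mpr (by linarith)
  have hb2 : Real.sqrt (t+1) ^ 2 = t + 1 := Real.sq_sqrt (by linarith)
  have hc : (0:ℝ) < Real.sqrt 2 := Real.sqrt_pos.mpr (by norm_num)
  have hc2 : Real.sqrt 2 ^ 2 = 2 := Real.sq_sqrt (by norm_num)
  have hb1 : (1:ℝ) ≤ Real.sqrt (t+1) := by nlinarith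
  have hc1 : (1:ℝ) ≤ Real.sqrt 2 := by nlinarith
  -- key bound on the second factor
  have key : |Real.sqrt (t + 1) / t - Real.sqrt 2| ≤ (5/2) * (t - 1) := by
    set a := Real.sqrt (t+1)
    set b := Real.sqrt 2
    have hle : a ≤ b * t := by
      have h1 : Real.sqrt (t+1) ≤ Real.sqrt (2 * t^2) :=
        Real.sqrt_le_sqrt (by nlinarith)
      rwa [Real.sqrt_mul (by norm_num) _, Real.sqrt_sq ht0.le] at h1
    have h0 : a / t - b ≤ 0 := by
      rw [sub_nonpos, div_le_iff₀ ht0]; linarith [hle]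
    have habs : |a / t - b| = (b * t - a) / t := by
      rw [abs_of_nonpos h0]; field_simp; try ring
    rw [habs]
    have hsum : (2:ℝ) ≤ b * t + a := by nlinarith
    have hprod : (b * t - a) * (b * t + a) = 2*t^2 - t - 1 := by
      linear_combination t^2 * hc2 - hb2
    have h1 : b * t - a ≤ (5/2) * (t - 1) := by
      nlinarith [mul_nonneg (sub_nonneg.mpr hle) (by linarith : (0:ℝ) ≤ b*t + a - 2),
        mul_nonneg (by linarith : (0:ℝ) ≤ 2 - t) (by linarith : (0:ℝ) ≤ t - 1)]
    have h2 : (b * t - a) / t ≤ b * t - a := by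
      apply div_le_self (by linarith) (by linarith)
    linarith
  rw [abs_mul, abs_of_nonneg ha.le]
  calc Real.sqrt (t-1) * |Real.sqrt (t + 1) / t - Real.sqrt 2|
      ≤ Real.sqrt (t-1) * ((5/2) * (t - 1)) := by
        exact mul_le_mul_of_nonneg_left key ha.le
    _ = (5/2) * (t - 1) * Real.sqrt (t - 1) := by ring

theorem asymptotic_near_one :
    ∃ C > (0:ℝ), ∃ δ > (0:ℝ), ∀ z : ℝ, 1 < z → z < 1 + δ →
      |Real.sqrt (z^2 - 1) - Real.arccos (1/z)
        - (2 * Real.sqrt 2 / 3) * (z - 1) ^ ((3:ℝ)/2)|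
        ≤ C * (z - 1) ^ ((5:ℝ)/2) := by
  set H : ℝ → ℝ := fun t => Real.sqrt (t^2 - 1) - Real.arccos (1/t)
    - (2 * Real.sqrt 2 / 3) * (t - 1) ^ ((3:ℝ)/2) with hH
  refine ⟨5/2, by norm_num, 1, by norm_num, fun z hz1 hz2 => ?_⟩
  have hz2' : z < 2 := by linarith
  have hzpos : (0:ℝ) < z - 1 := by linarith
  set C₀ : ℝ := (5/2) * (z - 1) * Real.sqrt (z - 1) with hC₀
  -- MVT bound for w ∈ (1, z)
  have mvt : ∀ w, 1 < w → w < z → |H z - H w| ≤ C₀ * (z - 1) := by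
    intro w hw1 hwz
    have hconv : Convex ℝ (Set.Icc w z) := convex_Icc w z
    have hderiv : ∀ x ∈ Set.Icc w z,
        HasDerivWithinAt H (Real.sqrt (x - 1) * (Real.sqrt (x + 1) / x - Real.sqrt 2))
          (Set.Icc w z) x := fun x hx =>
      (hasDerivAt_H (by linarith [hx.1])).hasDerivWithinAt
    have hbound : ∀ x ∈ Set.Icc w z,
        ‖Real.sqrt (x - 1) * (Real.sqrt (x + 1) / x - Real.sqrt 2)‖ ≤ C₀ := by
      intro x hx
      have hx1 : 1 < x := by linarith [hx.1]
      have hx2 : x < 2 := by linarith [hx.2]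
      rw [Real.norm_eq_abs]
      calc |Real.sqrt (x - 1) * (Real.sqrt (x + 1) / x - Real.sqrt 2)|
          ≤ (5/2) * (x - 1) * Real.sqrt (x - 1) := deriv_bound hx1 hx2
        _ ≤ C₀ := by
            rw [hC₀]
            have h1 : x - 1 ≤ z - 1 := by linarith [hx.2]
            have h2 : Real.sqrt (x-1) ≤ Real.sqrt (z-1) := Real.sqrt_le_sqrt h1
            have h3 : (0:ℝ) ≤ Real.sqrt (x-1) := Real.sqrt_nonneg _
            nlinarith [Real.sqrt_nonneg (z-1)]
    have := hconv.norm_image_sub_le_of_norm_hasDerivWithin_le hderiv hbound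
      (Set.right_mem_Icc.mpr hwz.le) (Set.left_mem_Icc.mpr hwz.le)
    rw [Real.norm_eq_abs, Real.norm_eq_abs] at this
    calc |H z - H w| ≤ C₀ * |w - z| := by rwa [abs_sub_comm (H z)]
      _ = C₀ * (z - w) := by rw [abs_of_nonpos (by linarith)]; ring
      _ ≤ C₀ * (z - 1) := by
          have : (0:ℝ) ≤ C₀ := by positivity
          nlinarith
  -- continuity at 1 from the right : H w → 0
  have hH1 : Filter.Tendsto H (nhdsWithin 1 (Set.Ioi 1)) (nhds 0) := by
    have hcont : ContinuousAt H 1 := by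
      apply ContinuousAt.sub
      apply ContinuousAt.sub
      · exact Real.continuous_sqrt.continuousAt.comp
          (by continuity : Continuous fun t : ℝ => t^2 - 1).continuousAt
      · exact Real.continuous_arccos.continuousAt.comp
          ((continuousAt_const.div continuousAt_id (by norm_num)))
      · exact continuousAt_const.mul
          ((Real.continuousAt_rpow_const _ _ (Or.inr (by norm_num))).comp
            ((continuousAt_id).sub continuousAt_const))
    have hval : H 1 = 0 := by
      simp [hH, Real.arccos_one, Real.zero_rpow (by norm_num : ((3:ℝ)/2) ≠ 0)]
    have h2 : Filter.Tendsto H (nhdsWithin 1 (Set.Ioi 1)) (nhds (H 1)) :=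
      hcont.continuousWithinAt
    rwa [hval] at h2
  -- conclude
  have hlim : Filter.Tendsto (fun w => |H z - H w|) (nhdsWithin 1 (Set.Ioi 1))
      (nhds |H z - 0|) := (Filter.Tendsto.abs (Filter.Tendsto.sub tendsto_const_nhds hH1))
  have hev : ∀ᶠ w in nhdsWithin 1 (Set.Ioi 1), |H z - H w| ≤ C₀ * (z - 1) := by
    filter_upwards [Ioo_mem_nhdsGT_of_mem (Set.mem_Ico.mpr ⟨le_refl 1, hz1⟩)]
      with w hw
    exact mvt w hw.1 hw.2
  have hfinal : |H z - 0| ≤ C₀ * (z - 1) := le_of_tendsto hlim hev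
  rw [sub_zero] at hfinal
  -- rewrite (z-1)^{5/2}
  have hr : (z - 1) ^ ((5:ℝ)/2) = (z-1) * Real.sqrt (z-1) * (z-1) := by
    rw [show (5:ℝ)/2 = 1 + 1/2 + 1 by norm_num, Real.rpow_add hzpos,
      Real.rpow_add hzpos, Real.rpow_one, ← Real.sqrt_eq_rpow]
  rw [hr]
  calc |H z| ≤ C₀ * (z - 1) := hfinal
    _ = 5/2 * ((z-1) * Real.sqrt (z-1) * (z-1)) := by rw [hC₀]; ring
end

section
/- There exist constants c₁, c₂ > 0 and δ > 0 such that for all ν > 0 and all x with ν < x < (1+δ)ν, one has c₁ * ν^{-1/2} * (x-ν)^{3/2} ≤ x * g(ν/x) ≤ c₂ * ν^{-1/2} * (x-ν)^{3/2}, where g(t) = (sqrt(1-t^2) - t*arccos(t))/π. -/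
set_option maxHeartbeats 1000000
open Real

lemma key_bounds {θ : ℝ} (h0 : 0 < θ) (h1 : θ ≤ 1/2) :
    θ^3/8 ≤ sin θ - θ * cos θ ∧ sin θ - θ * cos θ ≤ θ^3/2 ∧
    θ^2/4 ≤ 1 - cos θ ∧ 1 - cos θ ≤ θ^2/2 := by
  have hs : θ - θ^3/4 < sin θ := lt_of_le_of_lt (by nlinarith [pow_pos h0 3]) (Real.sin_gt_sub_cube h0)
  have hs' : sin θ < θ := Real.sin_lt h0
  have hh0 : 0 < θ/2 := by linarith
  have hhs : θ/2 - (θ/2)^3/4 < sin (θ/2) := lt_of_le_of_lt (by nlinarith [pow_pos hh0 3]) (Real.sin_gt_sub_cube hh0)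
  have hhs' : sin (θ/2) < θ/2 := Real.sin_lt hh0
  have hsn : 0 ≤ sin (θ/2) := Real.sin_nonneg_of_nonneg_of_le_pi hh0.le
    (by nlinarith [Real.pi_gt_three])
  have hcos : cos θ = 1 - 2 * sin (θ/2)^2 := by
    have h2 : cos (2*(θ/2)) = 2 * cos (θ/2)^2 - 1 := Real.cos_two_mul (θ/2)
    have h3 := Real.sin_sq_add_cos_sq (θ/2)
    rw [show 2*(θ/2) = θ by ring] at h2
    nlinarith
  have hl : 0 ≤ θ/2 - (θ/2)^3/4 := by nlinarith [sq_nonneg θ, pow_pos h0 3]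
  have hsq1 : sin (θ/2)^2 ≤ (θ/2)^2 := by nlinarith
  have hsq2 : (θ/2 - (θ/2)^3/4)^2 ≤ sin (θ/2)^2 := by nlinarith
  refine ⟨?_, ?_, ?_, ?_⟩
  · nlinarith
  · nlinarith
  · nlinarith
  · nlinarith

theorem xg_two_sided_estimate :
    ∃ c₁ > (0:ℝ), ∃ c₂ > (0:ℝ), ∃ δ > (0:ℝ), ∀ ν : ℝ, 0 < ν → ∀ x : ℝ,
      ν < x → x < (1 + δ) * ν →
      c₁ * ν ^ (-(1:ℝ)/2) * (x - ν) ^ ((3:ℝ)/2)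
          ≤ x * ((Real.sqrt (1 - (ν/x)^2) - (ν/x) * Real.arccos (ν/x)) / π) ∧
      x * ((Real.sqrt (1 - (ν/x)^2) - (ν/x) * Real.arccos (ν/x)) / π)
          ≤ c₂ * ν ^ (-(1:ℝ)/2) * (x - ν) ^ ((3:ℝ)/2) := by
  have hπ : 0 < π := Real.pi_pos
  refine ⟨1/(16*π), by positivity, 4/π, by positivity, 1/10, by norm_num, ?_⟩
  intro ν hν x hνx hx2
  have hx : 0 < x := hν.trans hνx
  set t : ℝ := ν / x with htdef
  have ht0 : 0 < t := div_pos hν hx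
  have ht1 : t < 1 := (div_lt_one hx).2 hνx
  have htl : 10/11 < t := by rw [htdef, lt_div_iff₀ hx]; nlinarith
  set θ : ℝ := Real.arccos t with hθdef
  have hθpos : 0 < θ := Real.arccos_pos.2 ht1
  have hθpi : θ ≤ π := Real.arccos_le_pi t
  have hcosθ : Real.cos θ = t := Real.cos_arccos (by linarith) ht1.le
  have hθle : θ ≤ 1/2 := by
    by_contra hcon
    push_neg at hcon
    have h2 : Real.cos θ ≤ Real.cos (1/2) :=
      Real.cos_le_cos_of_nonneg_of_le_pi (by norm_num) hθpi hcon.le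
    have h3 : (1:ℝ)/4 - (1/4)^3/4 < Real.sin (1/4) :=
      lt_of_le_of_lt (by norm_num) (Real.sin_gt_sub_cube (by norm_num : (0:ℝ) < 1/4))
    have h4 : Real.cos (1/2) = 1 - 2 * Real.sin (1/4)^2 := by
      have h5 : Real.cos (2*(1/4 : ℝ)) = 2 * Real.cos (1/4)^2 - 1 := Real.cos_two_mul (1/4)
      have h6 := Real.sin_sq_add_cos_sq (1/4 : ℝ)
      rw [show (2:ℝ)*(1/4) = 1/2 by norm_num] at h5
      nlinarith
    nlinarith
  obtain ⟨k1, k2, k3, k4⟩ := key_bounds hθpos hθle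
  have hsinθ : Real.sin θ = Real.sqrt (1 - t^2) := Real.sin_arccos t
  set E : ℝ := Real.sqrt (1 - t^2) - t * Real.arccos t with hEdef
  have hEeq : E = Real.sin θ - θ * Real.cos θ := by
    rw [hEdef, hsinθ, hcosθ]; ring
  have kE1 : θ^3/8 ≤ E := by rw [hEeq]; exact k1
  have k3' : θ^2/4 ≤ 1 - t := by rw [← hcosθ]; exact k3
  have k4' : 1 - t ≤ θ^2/2 := by rw [← hcosθ]; exact k4
  have kE2 : E ≤ θ^3/2 := by rw [hEeq]; exact k2
  set s : ℝ := x - ν with hsdef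
  have hs : 0 < s := by rw [hsdef]; linarith
  have h1t : 1 - t = s / x := by rw [htdef, hsdef]; field_simp
  have h1t0 : 0 ≤ 1 - t := by linarith
  -- (θ^2)^(3/2) = θ^3
  have hcube : ((θ^2 : ℝ))^((3:ℝ)/2) = θ^3 := by
    rw [← Real.rpow_natCast θ 2, ← Real.rpow_mul hθpos.le, ← Real.rpow_natCast θ 3]
    norm_num
  have hA : (1 - t)^((3:ℝ)/2) ≤ θ^3 := by
    rw [← hcube]
    exact Real.rpow_le_rpow h1t0 (by nlinarith [k4', sq_nonneg θ]) (by norm_num)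
  have hB : θ^3 ≤ 8 * (1 - t)^((3:ℝ)/2) := by
    have h48 : ((4:ℝ))^((3:ℝ)/2) = 8 := by
      rw [show (4:ℝ) = 2^(2:ℕ) by norm_num, ← Real.rpow_natCast 2 2,
        ← Real.rpow_mul (by norm_num), show ((2:ℕ):ℝ)*((3:ℝ)/2) = ((3:ℕ):ℝ) by norm_num,
        Real.rpow_natCast]
      norm_num
    have hth : θ^3 ≤ (4*(1-t))^((3:ℝ)/2) := by
      rw [← hcube]
      exact Real.rpow_le_rpow (by positivity) (by linarith) (by norm_num)
    rwa [Real.mul_rpow (by norm_num) h1t0, h48] at hth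
  have hE1 : (1 - t)^((3:ℝ)/2) ≤ 8 * E := by linarith
  have hE2 : E ≤ 4 * (1 - t)^((3:ℝ)/2) := by linarith
  -- convert to s, x
  set a : ℝ := Real.sqrt x with hadef
  set b : ℝ := Real.sqrt ν with hbdef
  have ha : 0 < a := Real.sqrt_pos.2 hx
  have hb : 0 < b := Real.sqrt_pos.2 hν
  have ha2 : a^2 = x := Real.sq_sqrt hx.le
  have hb2 : b^2 = ν := Real.sq_sqrt hν.le
  have hba : b ≤ a := Real.sqrt_le_sqrt hνx.le
  have hab2 : a ≤ 2*b := by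
    have h4 : x ≤ 4*ν := by linarith
    calc a = Real.sqrt x := rfl
      _ ≤ Real.sqrt (2^2*ν) := Real.sqrt_le_sqrt (by linarith)
      _ = 2*b := by rw [Real.sqrt_mul (by norm_num) ν, Real.sqrt_sq (by norm_num : (0:ℝ) ≤ 2)]
  set S : ℝ := s^((3:ℝ)/2) with hSdef
  have hS : 0 ≤ S := by rw [hSdef]; positivity
  have hx32 : x^((3:ℝ)/2) = x * a := by
    rw [hadef, show (3:ℝ)/2 = 1 + 1/2 by norm_num, Real.rpow_add hx, Real.rpow_one,
      Real.sqrt_eq_rpow]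
  have h1t32 : (1 - t)^((3:ℝ)/2) = S / (x * a) := by
    rw [h1t, Real.div_rpow hs.le hx.le, hx32, hSdef]
  have hνpow : ν ^ (-(1:ℝ)/2) = b⁻¹ := by
    rw [show (-(1:ℝ)/2) = -(1/2) by norm_num, Real.rpow_neg hν.le, hbdef, Real.sqrt_eq_rpow]
  have hxa : 0 < x * a := by positivity
  have hSle : S ≤ 8 * E * (x * a) := by
    have := hE1
    rw [h1t32, div_le_iff₀ hxa] at this
    linarith
  have hEle : E * (x * a) ≤ 4 * S := by
    have := hE2
    rw [h1t32] at this
    calc E * (x*a) ≤ (4 * (S/(x*a))) * (x*a) := by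
          exact mul_le_mul_of_nonneg_right this hxa.le
      _ = 4 * S := by field_simp
  constructor
  · calc 1/(16*π) * ν ^ (-(1:ℝ)/2) * S = S/(16*π*b) := by
          rw [hνpow]; field_simp
      _ ≤ x * E / π := by
          rw [div_le_div_iff₀ (by positivity) hπ]
          have hE0 : (0:ℝ) < E := lt_of_lt_of_le (by positivity) kE1
          calc S * π ≤ (8*E*(x*a)) * π := mul_le_mul_of_nonneg_right hSle hπ.le
            _ ≤ (8*E*(x*(2*b))) * π := by
                have hxaxb : x*a ≤ x*(2*b) := mul_le_mul_of_nonneg_left hab2 hx.le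
                exact mul_le_mul_of_nonneg_right
                  (mul_le_mul_of_nonneg_left hxaxb (by positivity)) hπ.le
            _ = x*E*(16*π*b) := by ring
      _ = x * (E / π) := by ring
  · calc x * (E / π) = x * E / π := by ring
      _ ≤ 4*S/(b*π) := by
          rw [div_le_div_iff₀ hπ (by positivity)]
          have hE0 : (0:ℝ) < E := lt_of_lt_of_le (by positivity) kE1
          calc x*E*(b*π) = (E*(x*b))*π := by ring
            _ ≤ (E*(x*a))*π := by
                have hxbxa : x*b ≤ x*a := mul_le_mul_of_nonneg_left hba hx.le
                exact mul_le_mul_of_nonneg_right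
                  (mul_le_mul_of_nonneg_left hxbxa hE0.le) hπ.le
            _ ≤ 4*S*π := mul_le_mul_of_nonneg_right hEle hπ.le
      _ = 4/π * ν ^ (-(1:ℝ)/2) * S := by rw [hνpow]; field_simp
end
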